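/- arXiv:2112.05431 — 3 statements merged into one kernel-verified Lean document; each statement's English description precedes it below -/
import Mathlib

section
/- There is an absolute constant C > 0 such that for all integers n ≥ 1 and c,d ≥ 1 with gcd(c,d) = 1, every r ∈ ℤ, and every α ∈ (0,1): |Σ_{0 ≤ l ≤ n, l·c ≡ r (mod d)} C(n,l)·α^l·(1−α)^{n−l} − 1/d| ≤ C/(√(α(1−α))·√n). -/
open Finset


lemma my_geom (t : ℝ) (h0 : 0 ≤ t) (h1 : t < 1) (N : ℕ) :
    ∑ k ∈ Finset.Ico 1 N, t ^ k ≤ t / (1 - t) := by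
  have h2 : (0:ℝ) < 1 - t := by linarith
  have heq : ∑ k ∈ Finset.Ico 1 N, t ^ k = t * ∑ k ∈ Finset.range (N - 1), t ^ k := by
    rw [Finset.sum_Ico_eq_sum_range, Finset.mul_sum]
    exact Finset.sum_congr rfl fun k _ => by rw [pow_add, pow_one]
  rw [heq]
  have hg : ∑ k ∈ Finset.range (N - 1), t ^ k ≤ 1 / (1 - t) := by
    rw [geom_sum_eq h1.ne]
    rw [show (t^(N-1) - 1)/(t - 1) = (1 - t^(N-1))/(1-t) by rw [← neg_div_neg_eq]; ring_nf]
    have hp : (0:ℝ) ≤ t ^ (N-1) := pow_nonneg h0 _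
    gcongr
    linarith
  calc t * ∑ k ∈ Finset.range (N - 1), t ^ k ≤ t * (1 / (1-t)) :=
        mul_le_mul_of_nonneg_left hg h0
    _ = t / (1 - t) := by ring

lemma my_exp_sum (b : ℝ) (hb : 0 < b) (N : ℕ) :
    ∑ k ∈ Finset.Ico 1 N, Real.exp (-(b * k)) ≤ 1 / b := by
  have ht1 : Real.exp (-b) < 1 := Real.exp_lt_one_iff.mpr (by linarith)
  have ht0 : (0:ℝ) ≤ Real.exp (-b) := (Real.exp_pos _).le
  have heq : ∑ k ∈ Finset.Ico 1 N, Real.exp (-(b * k))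
      = ∑ k ∈ Finset.Ico 1 N, (Real.exp (-b)) ^ k := by
    refine Finset.sum_congr rfl fun k _ => ?_
    rw [← Real.exp_nat_mul]; ring_nf
  rw [heq]
  refine (my_geom _ ht0 ht1 N).trans ?_
  have he : b + 1 ≤ Real.exp b := Real.add_one_le_exp b
  have hee : Real.exp (-b) * Real.exp b = 1 := by rw [← Real.exp_add]; simp
  rw [div_le_div_iff₀ (by linarith) hb]
  nlinarith [Real.exp_pos b, Real.exp_pos (-b)]

lemma my_gauss_sum (a : ℝ) (ha : 0 < a) (N : ℕ) :
    ∑ k ∈ Finset.Ico 1 N, Real.exp (-(a * (k:ℝ)^2)) ≤ 2 / Real.sqrt a := by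
  set b := Real.sqrt a with hbdef
  have hb : 0 < b := Real.sqrt_pos.mpr ha
  have hb2 : b ^ 2 = a := Real.sq_sqrt ha.le
  rw [← Finset.sum_filter_add_sum_filter_not (Finset.Ico 1 N) (fun k : ℕ => ((k:ℝ) ≤ 1/b))]
  have part1 : ∑ k ∈ (Finset.Ico 1 N).filter (fun k : ℕ => ((k:ℝ) ≤ 1/b)),
      Real.exp (-(a * (k:ℝ)^2)) ≤ 1 / b := by
    calc ∑ k ∈ (Finset.Ico 1 N).filter (fun k : ℕ => ((k:ℝ) ≤ 1/b)), Real.exp (-(a * (k:ℝ)^2))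
        ≤ ∑ _k ∈ (Finset.Ico 1 N).filter (fun k : ℕ => ((k:ℝ) ≤ 1/b)), (1:ℝ) := by
          refine Finset.sum_le_sum fun k _ => ?_
          rw [Real.exp_le_one_iff]
          have : (0:ℝ) ≤ a * (k:ℝ)^2 := by positivity
          linarith
      _ = (((Finset.Ico 1 N).filter (fun k : ℕ => ((k:ℝ) ≤ 1/b))).card : ℝ) := by simp
      _ ≤ 1 / b := by
          have hsub : (Finset.Ico 1 N).filter (fun k : ℕ => ((k:ℝ) ≤ 1/b)) ⊆
              Finset.Icc 1 (Nat.floor (1/b)) := by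
            intro k hk
            simp only [Finset.mem_filter, Finset.mem_Ico] at hk
            exact Finset.mem_Icc.mpr ⟨hk.1.1, Nat.le_floor hk.2⟩
          calc ((((Finset.Ico 1 N).filter (fun k : ℕ => ((k:ℝ) ≤ 1/b))).card) : ℝ)
              ≤ ((Finset.Icc 1 (Nat.floor (1/b))).card : ℝ) := by
                exact_mod_cast Finset.card_le_card hsub
            _ ≤ 1 / b := by
                rw [Nat.card_Icc]
                simp only [Nat.add_sub_cancel]
                exact Nat.floor_le (by positivity)
  have part2 : ∑ k ∈ (Finset.Ico 1 N).filter (fun k : ℕ => ¬ ((k:ℝ) ≤ 1/b)),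
      Real.exp (-(a * (k:ℝ)^2)) ≤ 1 / b := by
    calc ∑ k ∈ (Finset.Ico 1 N).filter (fun k : ℕ => ¬ ((k:ℝ) ≤ 1/b)), Real.exp (-(a * (k:ℝ)^2))
        ≤ ∑ k ∈ (Finset.Ico 1 N).filter (fun k : ℕ => ¬ ((k:ℝ) ≤ 1/b)), Real.exp (-(b * k)) := by
          refine Finset.sum_le_sum fun k hk => ?_
          simp only [Finset.mem_filter, not_le] at hk
          have h1 : 1 < b * k := by
            rw [div_lt_iff₀ hb] at hk; linarith [hk.2]
          apply Real.exp_le_exp.mpr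
          have h3 : b * k ≤ (b * k) * (b * k) := le_mul_of_one_le_right (by linarith) h1.le
          have h4 : (b*k)*(b*k) = a * (k:ℝ)^2 := by rw [← hb2]; ring
          linarith
      _ ≤ ∑ k ∈ Finset.Ico 1 N, Real.exp (-(b * k)) := by
          apply Finset.sum_le_sum_of_subset_of_nonneg (Finset.filter_subset _ _)
          intro k _ _; positivity
      _ ≤ 1 / b := my_exp_sum b hb N
  calc _ ≤ 1/b + 1/b := add_le_add part1 part2
    _ = 2 / b := by ring

lemma my_char {d : ℕ} (hd : 0 < d) {ω : ℂ} (hω : IsPrimitiveRoot ω d) (x : ℤ) :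
    ∑ j ∈ Finset.range d, ω ^ ((j:ℤ) * x) = if (d:ℤ) ∣ x then (d:ℂ) else 0 := by
  have hω0 : ω ≠ 0 := hω.ne_zero hd.ne'
  have hterm : ∀ j : ℕ, ω ^ ((j:ℤ) * x) = (ω ^ x) ^ j := by
    intro j
    rw [mul_comm, zpow_mul, zpow_natCast]
  simp only [hterm]
  by_cases h : ω ^ x = 1
  · rw [if_pos ((hω.zpow_eq_one_iff_dvd x).mp h)]
    simp [h]
  · rw [if_neg (fun hdvd => h ((hω.zpow_eq_one_iff_dvd x).mpr hdvd))]
    rw [geom_sum_eq h]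
    have hpow : (ω ^ x) ^ d = 1 := by
      rw [← zpow_natCast, ← zpow_mul, mul_comm, zpow_mul, zpow_natCast, hω.pow_eq_one, one_zpow]
    rw [hpow]
    simp

lemma my_term_bound (α : ℝ) (h0 : 0 < α) (h1 : α < 1) (n : ℕ) (θ : ℝ) :
    ‖(α:ℂ) * Complex.exp ((θ:ℝ) * Complex.I) + (1 - (α:ℂ))‖ ^ n
      ≤ Real.exp (-(2 * n * (α*(1-α)) * Real.sin (θ/2)^2)) := by
  set z : ℂ := (α:ℂ) * Complex.exp ((θ:ℝ) * Complex.I) + (1 - (α:ℂ)) with hz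
  have habs : ‖z‖ ^ 2 = 1 - 4*α*(1-α)*Real.sin (θ/2)^2 := by
    rw [Complex.sq_norm, Complex.normSq_apply]
    have hre : z.re = α * Real.cos θ + (1 - α) := by
      simp [hz, Complex.exp_ofReal_mul_I_re]
    have him : z.im = α * Real.sin θ := by
      simp [hz, Complex.exp_mul_I, Complex.sin_ofReal_re]
    rw [hre, him]
    have hs : Real.sin (θ/2)^2 = 1/2 - Real.cos (2 * (θ/2))/2 := Real.sin_sq_eq_half_sub _
    have h2 : (2:ℝ) * (θ/2) = θ := by ring
    rw [h2] at hs
    have hpy : Real.sin θ ^2 + Real.cos θ ^2 = 1 := Real.sin_sq_add_cos_sq θ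
    rw [hs]
    linear_combination α^2 * hpy
  have hstep : ‖z‖ ≤ Real.exp (-(2 * (α*(1-α)) * Real.sin (θ/2)^2)) := by
    have h4 : ‖z‖ ^ 2 ≤ Real.exp (-(4 * (α*(1-α)) * Real.sin (θ/2)^2)) := by
      rw [habs]
      have := Real.add_one_le_exp (-(4 * (α*(1-α)) * Real.sin (θ/2)^2))
      linarith
    have hsq : Real.exp (-(4 * (α*(1-α)) * Real.sin (θ/2)^2))
        = (Real.exp (-(2 * (α*(1-α)) * Real.sin (θ/2)^2))) ^ 2 := by
      rw [← Real.exp_nat_mul]; ring_nf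
    rw [hsq] at h4
    calc ‖z‖ = Real.sqrt (‖z‖ ^ 2) :=
          (Real.sqrt_sq (norm_nonneg z)).symm
      _ ≤ Real.sqrt ((Real.exp (-(2 * (α*(1-α)) * Real.sin (θ/2)^2))) ^ 2) :=
          Real.sqrt_le_sqrt h4
      _ = _ := Real.sqrt_sq (Real.exp_pos _).le
  calc ‖z‖ ^ n ≤ (Real.exp (-(2 * (α*(1-α)) * Real.sin (θ/2)^2))) ^ n :=
        pow_le_pow_left₀ (norm_nonneg z) hstep n
    _ = Real.exp (-(2 * n * (α*(1-α)) * Real.sin (θ/2)^2)) := by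
        rw [← Real.exp_nat_mul]; ring_nf

lemma my_identity (n c d : ℕ) (hd : 0 < d) (r : ℤ) (α : ℝ)
    {ω : ℂ} (hωprim : IsPrimitiveRoot ω d) :
    (∑ l ∈ (Finset.range (n + 1)).filter
        (fun l : ℕ => Int.ModEq (d : ℤ) ((l : ℤ) * (c : ℤ)) r),
      (((n.choose l : ℝ) * α ^ l * (1 - α) ^ (n - l) : ℝ) : ℂ)) - 1/(d:ℂ)
    = (1/(d:ℂ)) * ∑ j ∈ Finset.Ico 1 d,
        ω ^ (-((j:ℤ) * r)) * ((α:ℂ) * ω ^ (j*c) + (1 - (α:ℂ)))^n := by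
  have hdz : d ≠ 0 := hd.ne'
  have hdC : (d:ℂ) ≠ 0 := Nat.cast_ne_zero.mpr hdz
  have hω0 : ω ≠ 0 := hωprim.ne_zero hdz
  set q : ℕ → ℂ := fun l => ((n.choose l : ℂ) * (α:ℂ) ^ l * (1 - (α:ℂ)) ^ (n - l)) with hq
  -- step 1: filter to indicator
  have step1 : (∑ l ∈ (Finset.range (n + 1)).filter
        (fun l : ℕ => Int.ModEq (d : ℤ) ((l : ℤ) * (c : ℤ)) r),
      (((n.choose l : ℝ) * α ^ l * (1 - α) ^ (n - l) : ℝ) : ℂ))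
      = ∑ l ∈ Finset.range (n + 1),
          q l * ((1/(d:ℂ)) * ∑ j ∈ Finset.range d, ω ^ ((j:ℤ) * ((l:ℤ) * c - r))) := by
    rw [Finset.sum_filter]
    refine Finset.sum_congr rfl fun l _ => ?_
    rw [my_char hd hωprim ((l:ℤ) * c - r)]
    have hiff : Int.ModEq (d : ℤ) ((l : ℤ) * (c : ℤ)) r ↔ (d:ℤ) ∣ ((l:ℤ) * c - r) := by
      rw [Int.modEq_iff_dvd, dvd_sub_comm]
    by_cases h : Int.ModEq (d : ℤ) ((l : ℤ) * (c : ℤ)) r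
    · rw [if_pos h, if_pos (hiff.mp h)]
      push_cast [hq]
      field_simp
    · rw [if_neg h, if_neg (fun hdvd => h (hiff.mpr hdvd))]
      simp
  rw [step1]
  -- step 2: swap sums
  have step2 : ∑ l ∈ Finset.range (n + 1),
          q l * ((1/(d:ℂ)) * ∑ j ∈ Finset.range d, ω ^ ((j:ℤ) * ((l:ℤ) * c - r)))
      = (1/(d:ℂ)) * ∑ j ∈ Finset.range d,
          ω ^ (-((j:ℤ) * r)) * ((α:ℂ) * ω ^ (j*c) + (1 - (α:ℂ)))^n := by
    have swap : ∑ l ∈ Finset.range (n + 1),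
          q l * ((1/(d:ℂ)) * ∑ j ∈ Finset.range d, ω ^ ((j:ℤ) * ((l:ℤ) * c - r)))
        = (1/(d:ℂ)) * ∑ j ∈ Finset.range d, ∑ l ∈ Finset.range (n + 1),
            q l * ω ^ ((j:ℤ) * ((l:ℤ) * c - r)) := by
      calc ∑ l ∈ Finset.range (n + 1),
            q l * ((1/(d:ℂ)) * ∑ j ∈ Finset.range d, ω ^ ((j:ℤ) * ((l:ℤ) * c - r)))
          = ∑ l ∈ Finset.range (n + 1), ∑ j ∈ Finset.range d,
              (1/(d:ℂ)) * (q l * ω ^ ((j:ℤ) * ((l:ℤ) * c - r))) := by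
            refine Finset.sum_congr rfl fun l _ => ?_
            rw [Finset.mul_sum, Finset.mul_sum]
            exact Finset.sum_congr rfl fun j _ => by ring
        _ = ∑ j ∈ Finset.range d, ∑ l ∈ Finset.range (n + 1),
              (1/(d:ℂ)) * (q l * ω ^ ((j:ℤ) * ((l:ℤ) * c - r))) := Finset.sum_comm
        _ = (1/(d:ℂ)) * ∑ j ∈ Finset.range d, ∑ l ∈ Finset.range (n + 1),
              q l * ω ^ ((j:ℤ) * ((l:ℤ) * c - r)) := by
            rw [Finset.mul_sum]
            exact Finset.sum_congr rfl fun j _ => by rw [Finset.mul_sum]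
    rw [swap]
    congr 1
    refine Finset.sum_congr rfl fun j _ => ?_
    -- inner sum over l
    have hterm : ∀ l : ℕ, ω ^ ((j:ℤ) * ((l:ℤ) * c - r))
        = (ω ^ (j*c)) ^ l * ω ^ (-((j:ℤ) * r)) := by
      intro l
      have hexp : (j:ℤ) * ((l:ℤ) * c - r) = ((j*c : ℕ) : ℤ) * (l:ℤ) + (-((j:ℤ) * r)) := by
        push_cast; ring
      rw [hexp, zpow_add₀ hω0, zpow_mul, zpow_natCast, zpow_natCast]
    simp_rw [hterm]
    have : ∑ l ∈ Finset.range (n + 1), q l * ((ω ^ (j*c)) ^ l * ω ^ (-((j:ℤ) * r)))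
        = ω ^ (-((j:ℤ) * r)) * ∑ l ∈ Finset.range (n + 1),
            ((α:ℂ) * ω ^ (j*c)) ^ l * (1 - (α:ℂ)) ^ (n - l) * (n.choose l : ℂ) := by
      rw [Finset.mul_sum]
      refine Finset.sum_congr rfl fun l _ => ?_
      simp only [hq, mul_pow]
      ring
    rw [this, ← add_pow]
  rw [step2]
  -- step 3: peel off j = 0
  have step3 : ∑ j ∈ Finset.range d,
          ω ^ (-((j:ℤ) * r)) * ((α:ℂ) * ω ^ (j*c) + (1 - (α:ℂ)))^n
      = 1 + ∑ j ∈ Finset.Ico 1 d,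
          ω ^ (-((j:ℤ) * r)) * ((α:ℂ) * ω ^ (j*c) + (1 - (α:ℂ)))^n := by
    rw [Finset.range_eq_Ico, Finset.sum_eq_sum_Ico_succ_bot hd]
    norm_num
  rw [step3]
  field_simp
  ring

lemma my_reindex (c d : ℕ) (hd : 0 < d) (hcd : Nat.gcd c d = 1) (G : ℕ → ℝ) :
    ∑ j ∈ Finset.Ico 1 d, G (j * c % d) = ∑ k ∈ Finset.Ico 1 d, G k := by
  haveI : NeZero d := ⟨hd.ne'⟩
  set u : (ZMod d)ˣ := ZMod.unitOfCoprime c hcd with hu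
  set c' : ℕ := ZMod.val ((u⁻¹ : (ZMod d)ˣ) : ZMod d) with hc'
  have huc : ((u : ZMod d)) = (c : ZMod d) := ZMod.coe_unitOfCoprime c hcd
  have hcc' : (c : ZMod d) * (c' : ZMod d) = 1 := by
    rw [hc', ZMod.natCast_val, ZMod.cast_id, ← huc, ← Units.val_mul, mul_inv_cancel, Units.val_one]
  have hinj : ∀ x y : ℕ, x < d → y < d → ((x : ZMod d) = (y : ZMod d)) → x = y := by
    intro x y hx hy h
    have h2 := congrArg ZMod.val h
    rwa [ZMod.val_cast_of_lt hx, ZMod.val_cast_of_lt hy] at h2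
  have hmem : ∀ (e : ℕ), (∀ k : ℕ, (d:ℤ) ∣ (k * e) → (d:ℤ) ∣ k) →
      ∀ j ∈ Finset.Ico 1 d, j * e % d ∈ Finset.Ico 1 d := by
    intro e he j hj
    rw [Finset.mem_Ico] at hj ⊢
    refine ⟨?_, Nat.mod_lt _ hd⟩
    rcases Nat.eq_zero_or_pos (j * e % d) with h0 | h1
    · exfalso
      have : (d:ℤ) ∣ j * e := by
        exact_mod_cast Int.natCast_dvd_natCast.mpr (Nat.dvd_of_mod_eq_zero h0)
      have hdj : (d:ℤ) ∣ j := he j this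
      have : d ∣ j := Int.natCast_dvd_natCast.mp hdj
      have := Nat.le_of_dvd (by omega) this
      omega
    · omega
  -- cancellation hypotheses
  have hecancel : ∀ e : ℕ, ((e : ZMod d)) * _root_.id 1 = 0 → True := fun _ _ => trivial
  have hcancel_c : ∀ k : ℕ, (d:ℤ) ∣ (k * c) → (d:ℤ) ∣ k := by
    intro k hk
    have h1 : ((k * c : ℕ) : ZMod d) = 0 := by
      rw [ZMod.natCast_eq_zero_iff]
      exact_mod_cast hk
    have h2 : (k : ZMod d) * (c : ZMod d) = 0 := by push_cast at h1; exact h1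
    have h3 : (k : ZMod d) = 0 := by
      have := congrArg (· * (c' : ZMod d)) h2
      simp only [zero_mul] at this
      rwa [mul_assoc, hcc', mul_one] at this
    rw [ZMod.natCast_eq_zero_iff] at h3
    exact_mod_cast h3
  have hcancel_c' : ∀ k : ℕ, (d:ℤ) ∣ (k * c') → (d:ℤ) ∣ k := by
    intro k hk
    have h1 : ((k * c' : ℕ) : ZMod d) = 0 := by
      rw [ZMod.natCast_eq_zero_iff]
      exact_mod_cast hk
    have h2 : (k : ZMod d) * (c' : ZMod d) = 0 := by push_cast at h1; exact h1
    have h3 : (k : ZMod d) = 0 := by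
      have := congrArg (· * (c : ZMod d)) h2
      simp only [zero_mul] at this
      rw [mul_assoc] at this
      rw [show (c' : ZMod d) * (c : ZMod d) = 1 by rw [mul_comm]; exact hcc'] at this
      rwa [mul_one] at this
    rw [ZMod.natCast_eq_zero_iff] at h3
    exact_mod_cast h3
  refine Finset.sum_nbij' (fun j => j * c % d) (fun k => k * c' % d)
    (hmem c hcancel_c) (hmem c' hcancel_c') ?_ ?_ ?_
  · intro j hj
    rw [Finset.mem_Ico] at hj
    apply hinj _ _ (Nat.mod_lt _ hd) hj.2
    push_cast [ZMod.natCast_mod]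
    rw [mul_assoc, hcc', mul_one]
  · intro k hk
    rw [Finset.mem_Ico] at hk
    apply hinj _ _ (Nat.mod_lt _ hd) hk.2
    push_cast [ZMod.natCast_mod]
    rw [mul_assoc]
    rw [show (c' : ZMod d) * (c : ZMod d) = 1 by rw [mul_comm]; exact hcc', mul_one]
  · intro j _
    rfl



set_option maxHeartbeats 1000000 in
/-- **Binomial probabilities along a dilated residue class.**  There is an absolute
constant `C > 0` such that for all integers `n ≥ 1` and `c, d ≥ 1` with
`gcd(c,d) = 1`, every `r ∈ ℤ` and every `α ∈ (0,1)`, the sum of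
`C(n,l)α^l(1−α)^{n−l}` over `0 ≤ l ≤ n` with `l·c ≡ r (mod d)` differs from `1/d` by
at most `C/(√(α(1−α))·√n)`. -/
theorem binomial_probabilities_dilated_residue_class :
    ∃ C : ℝ, 0 < C ∧
      ∀ (n c d : ℕ), 1 ≤ n → 1 ≤ c → 1 ≤ d → Nat.gcd c d = 1 →
      ∀ (r : ℤ), ∀ (α : ℝ), 0 < α → α < 1 →
        |(∑ l ∈ (Finset.range (n + 1)).filter
              (fun l : ℕ => Int.ModEq (d : ℤ) ((l : ℤ) * (c : ℤ)) r),
            (n.choose l : ℝ) * α ^ l * (1 - α) ^ (n - l)) - 1 / (d : ℝ)|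
          ≤ C / (Real.sqrt (α * (1 - α)) * Real.sqrt n) := by
  refine ⟨2, by norm_num, ?_⟩
  intro n c d hn hc hd hcd r α hα0 hα1
  have hdz : d ≠ 0 := by omega
  have hd0 : (0:ℝ) < d := by exact_mod_cast Nat.pos_of_ne_zero hdz
  set γ : ℝ := α * (1 - α) with hγdef
  have hγ0 : 0 < γ := by nlinarith
  have hn0 : (0:ℝ) < n := by exact_mod_cast hn
  set ω : ℂ := Complex.exp (2 * Real.pi * Complex.I / d) with hωdef
  have hωprim : IsPrimitiveRoot ω d := Complex.isPrimitiveRoot_exp d hdz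
  have hω0 : ω ≠ 0 := hωprim.ne_zero hdz
  -- reduce to complex abs
  have hcast : |(∑ l ∈ (Finset.range (n + 1)).filter
        (fun l : ℕ => Int.ModEq (d : ℤ) ((l : ℤ) * (c : ℤ)) r),
      (n.choose l : ℝ) * α ^ l * (1 - α) ^ (n - l)) - 1 / (d : ℝ)|
      = ‖(∑ l ∈ (Finset.range (n + 1)).filter
          (fun l : ℕ => Int.ModEq (d : ℤ) ((l : ℤ) * (c : ℤ)) r),
        (((n.choose l : ℝ) * α ^ l * (1 - α) ^ (n - l) : ℝ) : ℂ)) - 1/(d:ℂ)‖ := by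
    rw [show (∑ l ∈ (Finset.range (n + 1)).filter
          (fun l : ℕ => Int.ModEq (d : ℤ) ((l : ℤ) * (c : ℤ)) r),
        (((n.choose l : ℝ) * α ^ l * (1 - α) ^ (n - l) : ℝ) : ℂ)) - 1/(d:ℂ)
      = (((∑ l ∈ (Finset.range (n + 1)).filter
          (fun l : ℕ => Int.ModEq (d : ℤ) ((l : ℤ) * (c : ℤ)) r),
        (n.choose l : ℝ) * α ^ l * (1 - α) ^ (n - l)) - 1/(d:ℝ) : ℝ) : ℂ) by push_cast; ring]
    rw [Complex.norm_real, Real.norm_eq_abs]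
  rw [hcast, my_identity n c d (by omega) r α hωprim]
  -- setup
  have hωalt : ω = Complex.exp (((2*Real.pi/d : ℝ):ℂ) * Complex.I) := by
    rw [hωdef]
    congr 1
    push_cast
    ring
  have habsω : ‖ω‖ = 1 := by
    rw [hωalt]; exact Complex.norm_exp_ofReal_mul_I _
  have hperiod : ∀ m : ℕ, ω ^ m = ω ^ (m % d) := by
    intro m
    conv_lhs => rw [← Nat.div_add_mod m d]
    rw [pow_add, pow_mul, hωprim.pow_eq_one, one_pow, one_mul]
  set G : ℕ → ℝ := fun k => ‖(α:ℂ) * ω ^ k + (1 - (α:ℂ))‖ ^ n with hGdef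
  set a : ℝ := 8 * γ * n / d^2 with hadef
  have ha0 : 0 < a := by positivity
  set F : ℕ → ℝ := fun m => Real.exp (-(a * (m:ℝ)^2)) with hFdef
  -- step: abs bound by sum of G
  have habs1 : ‖(1/(d:ℂ)) * ∑ j ∈ Finset.Ico 1 d,
        ω ^ (-((j:ℤ) * r)) * ((α:ℂ) * ω ^ (j*c) + (1 - (α:ℂ)))^n‖
      ≤ (1/(d:ℝ)) * ∑ j ∈ Finset.Ico 1 d, G (j * c % d) := by
    rw [norm_mul]
    have h1 : ‖1/(d:ℂ)‖ = 1/(d:ℝ) := by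
      rw [norm_div, norm_one, Complex.norm_natCast]
    rw [h1]
    apply mul_le_mul_of_nonneg_left ?_ (by positivity)
    refine (norm_sum_le _ _).trans ?_
    refine Finset.sum_le_sum fun j _ => ?_
    rw [norm_mul, norm_zpow, habsω, one_zpow, one_mul, norm_pow]
    rw [hperiod (j*c)]
  -- termwise bound on G
  have hGbound : ∀ k ∈ Finset.Ico 1 d, G k ≤ F k + F (d - k) := by
    intro k hk
    rw [Finset.mem_Ico] at hk
    have hkd : (k:ℝ) < d := by exact_mod_cast hk.2
    have hk1 : (1:ℝ) ≤ k := by exact_mod_cast hk.1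
    have hωk : ω ^ k = Complex.exp (((2*Real.pi*k/d : ℝ):ℂ) * Complex.I) := by
      rw [hωalt, ← Complex.exp_nat_mul]
      congr 1
      push_cast
      ring
    have hbase := my_term_bound α hα0 hα1 n (2*Real.pi*k/d)
    rw [← hωk] at hbase
    have hhalf : (2*Real.pi*k/d)/2 = Real.pi*k/d := by ring
    rw [hhalf] at hbase
    have hπ := Real.pi_pos
    by_cases hcase : 2*k ≤ d
    · -- sin(πk/d) ≥ 2k/d
      have hx0 : (0:ℝ) ≤ Real.pi*k/d := by positivity
      have hx1 : Real.pi*k/d ≤ Real.pi/2 := by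
        rw [div_le_div_iff₀ hd0 (by norm_num : (0:ℝ) < 2)]
        have : (2*k:ℝ) ≤ d := by exact_mod_cast hcase
        nlinarith
      have hsin := Real.mul_le_sin hx0 hx1
      have hsin2 : 2*(k:ℝ)/d ≤ Real.sin (Real.pi*k/d) := by
        calc 2*(k:ℝ)/d = 2/Real.pi * (Real.pi*k/d) := by field_simp
          _ ≤ _ := hsin
      have hG1 : G k ≤ F k := by
        refine hbase.trans ?_
        rw [hFdef]
        simp only
        apply Real.exp_le_exp.mpr
        rw [neg_le_neg_iff]
        have h2 : (2*(k:ℝ)/d)^2 ≤ Real.sin (Real.pi*k/d)^2 := by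
          apply pow_le_pow_left₀ (by positivity) hsin2
        calc a * (k:ℝ)^2 = 2 * n * γ * (2*(k:ℝ)/d)^2 := by
              rw [hadef]; field_simp; ring
          _ ≤ 2 * n * γ * Real.sin (Real.pi*k/d)^2 := by
              apply mul_le_mul_of_nonneg_left h2 (by positivity)
          _ = 2 * n * γ * Real.sin (Real.pi*k/d)^2 := rfl
      have : (0:ℝ) ≤ F (d - k) := (Real.exp_pos _).le
      linarith
    · -- use sin(πk/d) = sin(π(d-k)/d) ≥ 2(d-k)/d
      push_neg at hcase
      have hdk : ((d - k : ℕ):ℝ) = (d:ℝ) - k := by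
        rw [Nat.cast_sub hk.2.le]
      have hsin_eq : Real.sin (Real.pi*k/d) = Real.sin (Real.pi*((d:ℝ)-k)/d) := by
        rw [show Real.pi*((d:ℝ)-k)/d = Real.pi - Real.pi*k/d by field_simp]
        rw [Real.sin_pi_sub]
      have hx0 : (0:ℝ) ≤ Real.pi*((d:ℝ)-k)/d := by
        apply div_nonneg (mul_nonneg Real.pi_pos.le (by linarith)) hd0.le
      have hx1 : Real.pi*((d:ℝ)-k)/d ≤ Real.pi/2 := by
        rw [div_le_div_iff₀ hd0 (by norm_num : (0:ℝ) < 2)]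
        have : (d:ℝ) < 2*k := by exact_mod_cast hcase
        nlinarith
      have hsin := Real.mul_le_sin hx0 hx1
      have hsin2 : 2*((d:ℝ)-k)/d ≤ Real.sin (Real.pi*k/d) := by
        rw [hsin_eq]
        calc 2*((d:ℝ)-k)/d = 2/Real.pi * (Real.pi*((d:ℝ)-k)/d) := by field_simp
          _ ≤ _ := hsin
      have hG1 : G k ≤ F (d - k) := by
        refine hbase.trans ?_
        rw [hFdef]
        simp only
        apply Real.exp_le_exp.mpr
        rw [neg_le_neg_iff]
        have hsinnn : (0:ℝ) ≤ 2*((d:ℝ)-k)/d := by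
          apply div_nonneg (by linarith) hd0.le
        have h2 : (2*((d:ℝ)-k)/d)^2 ≤ Real.sin (Real.pi*k/d)^2 :=
          pow_le_pow_left₀ hsinnn hsin2 2
        calc a * ((d-k:ℕ):ℝ)^2 = 2 * n * γ * (2*((d:ℝ)-k)/d)^2 := by
              rw [hadef, hdk]; field_simp; ring
          _ ≤ 2 * n * γ * Real.sin (Real.pi*k/d)^2 := by
              apply mul_le_mul_of_nonneg_left h2 (by positivity)
      have : (0:ℝ) ≤ F k := (Real.exp_pos _).le
      linarith
  -- reflection sum
  have hreflect : ∑ k ∈ Finset.Ico 1 d, F (d - k) = ∑ k ∈ Finset.Ico 1 d, F k := by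
    refine Finset.sum_nbij' (fun k => d - k) (fun k => d - k) ?_ ?_ ?_ ?_ ?_
    · intro k hk; simp only [Finset.mem_Ico] at hk ⊢; omega
    · intro k hk; simp only [Finset.mem_Ico] at hk ⊢; omega
    · intro k hk; simp only [Finset.mem_Ico] at hk; show d - (d - k) = k; omega
    · intro k hk; simp only [Finset.mem_Ico] at hk; show d - (d - k) = k; omega
    · intro k _; rfl
  -- put together
  calc ‖(1/(d:ℂ)) * ∑ j ∈ Finset.Ico 1 d,
        ω ^ (-((j:ℤ) * r)) * ((α:ℂ) * ω ^ (j*c) + (1 - (α:ℂ)))^n‖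
      ≤ (1/(d:ℝ)) * ∑ j ∈ Finset.Ico 1 d, G (j * c % d) := habs1
    _ = (1/(d:ℝ)) * ∑ k ∈ Finset.Ico 1 d, G k := by
        rw [my_reindex c d (by omega) hcd G]
    _ ≤ (1/(d:ℝ)) * ∑ k ∈ Finset.Ico 1 d, (F k + F (d - k)) := by
        apply mul_le_mul_of_nonneg_left (Finset.sum_le_sum hGbound) (by positivity)
    _ = (1/(d:ℝ)) * (∑ k ∈ Finset.Ico 1 d, F k + ∑ k ∈ Finset.Ico 1 d, F (d - k)) := by
        rw [Finset.sum_add_distrib]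
    _ = (1/(d:ℝ)) * (2 * ∑ k ∈ Finset.Ico 1 d, F k) := by
        rw [hreflect]; ring
    _ ≤ (1/(d:ℝ)) * (2 * (2 / Real.sqrt a)) := by
        apply mul_le_mul_of_nonneg_left ?_ (by positivity)
        apply mul_le_mul_of_nonneg_left (my_gauss_sum a ha0 d) (by norm_num)
    _ ≤ 2 / (Real.sqrt γ * Real.sqrt n) := by
        have hda : (d:ℝ) * Real.sqrt a = Real.sqrt (8 * γ * n) := by
          rw [show (d:ℝ) = Real.sqrt ((d:ℝ)^2) by rw [Real.sqrt_sq hd0.le]]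
          rw [← Real.sqrt_mul (by positivity)]
          congr 1
          rw [hadef]
          field_simp
        have h4 : Real.sqrt (4*(γ*(n:ℝ))) = 2*Real.sqrt (γ*(n:ℝ)) := by
          rw [show (4:ℝ)*(γ*(n:ℝ)) = (2*Real.sqrt (γ*(n:ℝ)))^2 by
            rw [mul_pow, Real.sq_sqrt (by positivity)]; ring]
          exact Real.sqrt_sq (by positivity)
        have hsq8 : Real.sqrt (γ * (n:ℝ)) ≤ Real.sqrt (8 * γ * n) / 2 := by
          have hmono : Real.sqrt (4*(γ*(n:ℝ))) ≤ Real.sqrt (8 * γ * n) :=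
            Real.sqrt_le_sqrt (by nlinarith)
          rw [h4] at hmono
          linarith
        have h8pos : 0 < Real.sqrt (8 * γ * n) := Real.sqrt_pos.mpr (by positivity)
        have hγn : Real.sqrt γ * Real.sqrt (n:ℝ) = Real.sqrt (γ * (n:ℝ)) :=
          (Real.sqrt_mul hγ0.le _).symm
        have hγnpos : 0 < Real.sqrt (γ * n) := Real.sqrt_pos.mpr (by positivity)
        rw [hγn]
        rw [show (1/(d:ℝ)) * (2 * (2 / Real.sqrt a)) = 4 / ((d:ℝ) * Real.sqrt a) by
          field_simp; norm_num]
        rw [hda]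
        rw [div_le_div_iff₀ h8pos hγnpos]
        nlinarith
end

section
/- For all integers a₀, b₀, r₀, u₀ ≥ 1: lim_{N→∞} (1/N²)·#{(n,m) : 0 ≤ n,m ≤ N and gcd(a₀ + n·r₀, b₀ + m·u₀) = 1} = Δ(a₀,b₀;r₀,u₀), where Δ(a₀,b₀;r₀,u₀) = Σ_{d ≥ 1, gcd(d,r₀) | a₀ and gcd(d,u₀) | b₀} (μ(d)/d²)·gcd(d,r₀)·gcd(d,u₀). -/
open Filter Finset


lemma card_filter_mod (q n0 N : ℕ) (hq : 0 < q) (hn0 : n0 < q) :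
    ((Finset.range (N+1)).filter (fun n => n % q = n0)).card
      = if n0 ≤ N then (N - n0)/q + 1 else 0 := by
  split_ifs with h
  · have : (Finset.range (N+1)).filter (fun n => n % q = n0)
        = (Finset.range ((N - n0)/q + 1)).image (fun i => n0 + q * i) := by
      ext m
      simp only [mem_filter, mem_range, mem_image]
      constructor
      · rintro ⟨hm, hmod⟩
        refine ⟨m / q, ?_, ?_⟩
        · have h1 : q * (m / q) ≤ N - n0 := by
            have : q * (m / q) + n0 = m := by
              conv_rhs => rw [← Nat.div_add_mod m q, hmod]
            omega
          have := Nat.div_le_div_right (c := q) h1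
          rwa [Nat.mul_div_cancel_left _ hq, Nat.lt_succ_iff] at *
        · have : q * (m / q) + n0 = m := by
            conv_rhs => rw [← Nat.div_add_mod m q, hmod]
          omega
      · rintro ⟨i, hi, rfl⟩
        rw [Nat.lt_succ_iff] at hi
        constructor
        · have : q * i ≤ q * ((N - n0)/q) := Nat.mul_le_mul_left _ hi
          have h2 : q * ((N - n0)/q) ≤ N - n0 := Nat.mul_div_le _ _
          omega
        · simp [Nat.add_mul_mod_self_left, Nat.mod_eq_of_lt hn0]
    rw [this, Finset.card_image_of_injective _ (fun a b hab => Nat.eq_of_mul_eq_mul_left hq (by omega)),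
      Finset.card_range]
  · rw [Finset.card_eq_zero, Finset.filter_eq_empty_iff]
    intro m hm
    simp only [mem_range] at hm
    intro hmod
    have := Nat.mod_le m q
    omega

lemma nat_lt_div_succ_mul (a b : ℕ) (h : 0 < b) : a < (a/b + 1) * b := by
  have h1 := Nat.div_add_mod a b
  have h2 := Nat.mod_lt a h
  have h3 : (a/b+1)*b = b*(a/b) + b := by ring
  omega

lemma abs_card_mod_sub (q n0 N : ℕ) (hq : 0 < q) (hn0 : n0 < q) :
    |(((Finset.range (N+1)).filter (fun n => n % q = n0)).card : ℝ) - (N+1)/q| ≤ 1 := by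
  rw [card_filter_mod q n0 N hq hn0]
  have hq' : (0:ℝ) < q := by exact_mod_cast hq
  split_ifs with h
  · set k := (N - n0)/q with hk
    rw [abs_sub_le_iff]
    constructor
    · -- k + 1 - (N+1)/q ≤ 1, i.e. k ≤ (N+1)/q
      have h1 : (k:ℝ) ≤ ((N - n0 : ℕ) : ℝ)/q := Nat.cast_div_le
      have h2 : ((N - n0 : ℕ) : ℝ) ≤ (N:ℝ) + 1 := by
        have : (N - n0 : ℕ) ≤ N + 1 := by omega
        exact_mod_cast this
      have : (k:ℝ) ≤ ((N:ℝ)+1)/q := h1.trans (by gcongr)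
      push_cast
      linarith
    · -- (N+1)/q - (k+1) ≤ 1, i.e. N+1 ≤ (k+2) q
      have h1 : N - n0 < (k + 1) * q := nat_lt_div_succ_mul _ _ hq
      have h2 : N + 1 ≤ (k + 2) * q := by
        have h3 : (k+2)*q = (k+1)*q + q := by ring
        omega
      have h2' : (N:ℝ) + 1 ≤ ((k:ℝ) + 2) * q := by exact_mod_cast h2
      have : ((N:ℝ)+1)/q ≤ (k:ℝ) + 2 := by
        rw [div_le_iff₀ hq']; linarith
      push_cast
      linarith
  · have h2 : (N:ℝ) + 1 ≤ q := by
      have : N + 1 ≤ q := by omega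
      exact_mod_cast this
    have h3 : (0:ℝ) ≤ ((N:ℝ)+1)/q := by positivity
    have : ((N:ℝ)+1)/q ≤ 1 := by rw [div_le_one hq']; linarith
    rw [abs_sub_le_iff]
    push_cast
    constructor <;> linarith

lemma not_solvable_empty {d r a : ℕ} (hg : ¬ Nat.gcd d r ∣ a) (n : ℕ) :
    ¬ d ∣ a + n * r := by
  intro hdvd
  have h1 : Nat.gcd d r ∣ a + n * r := (Nat.gcd_dvd_left d r).trans hdvd
  have h2 : Nat.gcd d r ∣ n * r := Dvd.dvd.mul_left (Nat.gcd_dvd_right d r) n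
  have h3 := Nat.dvd_sub h1 h2
  exact hg (by simpa using h3)

lemma solvable_iff_mod {d r a : ℕ} (hd : 0 < d) (hr : 0 < r)
    (hg : Nat.gcd d r ∣ a) :
    ∃ n0 < d / Nat.gcd d r, ∀ n : ℕ,
      d ∣ a + n * r ↔ n % (d / Nat.gcd d r) = n0 := by
  set g := Nat.gcd d r with hgdef
  have hg0 : 0 < g := Nat.gcd_pos_of_pos_left r hd
  set q := d / g with hqdef
  have hq0 : 0 < q := Nat.div_pos (Nat.le_of_dvd hd (Nat.gcd_dvd_left d r)) hg0
  have hdq : d = g * q := (Nat.mul_div_cancel' (Nat.gcd_dvd_left d r)).symm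
  set r' := r / g with hr'def
  have hrr : r = g * r' := (Nat.mul_div_cancel' (Nat.gcd_dvd_right d r)).symm
  have hcop : Nat.Coprime q r' := Nat.coprime_div_gcd_div_gcd hg0
  -- periodicity: condition depends only on n % q
  have hper : ∀ n : ℕ, (d ∣ a + n * r ↔ d ∣ a + (n % q) * r) := by
    intro n
    have hqr : q * r = d * r' := by rw [hdq, hrr]; ring
    have hn : a + n * r = (a + (n % q) * r) + d * (r' * (n / q)) := by
      conv_lhs => rw [← Nat.div_add_mod n q]
      have h5 : (q * (n / q) + n % q) * r = n % q * r + (n / q) * (q * r) := by ring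
      rw [h5, hqr]; ring
    rw [hn]
    constructor
    · intro h
      have := Nat.dvd_sub h (dvd_mul_right d (r' * (n / q)))
      simpa using this
    · intro h
      exact Nat.dvd_add h (dvd_mul_right d (r' * (n / q)))
  -- uniqueness of solutions below q
  have huniq : ∀ x y, x < q → y < q → d ∣ a + x * r → d ∣ a + y * r → x = y := by
    have key : ∀ x y, x ≤ y → y < q → d ∣ a + x * r → d ∣ a + y * r → x = y := by
      intro x y hxy hyq h1 h2
      have hsub : d ∣ (y - x) * r := by
        have := Nat.dvd_sub h2 h1
        have heq : a + y * r - (a + x * r) = (y - x) * r := by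
          have h6 : x * r ≤ y * r := Nat.mul_le_mul_right r hxy
          rw [Nat.sub_mul]; omega
        rwa [heq] at this
      have hsub2 : g * q ∣ g * ((y - x) * r') := by
        rw [← hdq]
        convert hsub using 1
        rw [hrr]; ring
      have hq1 : q ∣ (y - x) * r' := (mul_dvd_mul_iff_left hg0.ne').mp hsub2
      have hq2 : q ∣ y - x := (Nat.Coprime.dvd_of_dvd_mul_right hcop) hq1
      rcases Nat.eq_zero_or_pos (y - x) with h0 | h0
      · omega
      · have := Nat.le_of_dvd h0 hq2
        omega
    intro x y hx hy h1 h2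
    rcases le_total x y with h | h
    · exact key x y h hy h1 h2
    · exact (key y x h hx h2 h1).symm
  -- existence of a solution
  obtain ⟨n1, hn1⟩ : ∃ n1 : ℕ, d ∣ a + n1 * r := by
    have hbez : (g : ℤ) = d * Nat.gcdA d r + r * Nat.gcdB d r := Nat.gcd_eq_gcd_ab d r
    set A := Nat.gcdA d r
    set B := Nat.gcdB d r
    have ha' : (a : ℤ) = (a / g : ℕ) * g := by
      exact_mod_cast (Nat.div_mul_cancel hg).symm
    set m : ℤ := -(((a / g : ℕ) : ℤ) * B) with hm
    have hsol : (d : ℤ) ∣ (a : ℤ) + m * r := by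
      refine ⟨((a / g : ℕ) : ℤ) * A, ?_⟩
      rw [ha', hbez, hm]; ring
    set n1 : ℤ := m % (d : ℤ) with hn1def
    have hd0 : (d : ℤ) ≠ 0 := by exact_mod_cast hd.ne'
    have hn1nonneg : 0 ≤ n1 := Int.emod_nonneg m hd0
    have hsol2 : (d : ℤ) ∣ (a : ℤ) + n1 * r := by
      have : n1 = m - d * (m / d) := by rw [hn1def, Int.emod_def]
      rw [this]
      have : (a : ℤ) + (m - d * (m / d)) * r = ((a : ℤ) + m * r) - d * (m / d * r) := by ring
      rw [this]
      exact dvd_sub hsol ⟨m / d * r, rfl⟩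
    refine ⟨n1.toNat, ?_⟩
    have : ((a + n1.toNat * r : ℕ) : ℤ) = (a : ℤ) + n1 * r := by
      push_cast [Int.toNat_of_nonneg hn1nonneg]; ring
    exact_mod_cast this ▸ hsol2
  refine ⟨n1 % q, Nat.mod_lt _ hq0, fun n => ?_⟩
  have hsol0 : d ∣ a + (n1 % q) * r := (hper n1).mp hn1
  rw [hper n]
  constructor
  · intro h
    exact huniq _ _ (Nat.mod_lt _ hq0) (Nat.mod_lt _ hq0) h hsol0
  · intro h
    rw [h]; exact hsol0

lemma count_bound {d r a : ℕ} (hd : 0 < d) (hr : 0 < r) (hg : Nat.gcd d r ∣ a) (N : ℕ) :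
    |(((Finset.range (N+1)).filter (fun n => d ∣ a + n * r)).card : ℝ)
      - ((N:ℝ)+1) * (Nat.gcd d r) / d| ≤ 1 := by
  obtain ⟨n0, hn0, hiff⟩ := solvable_iff_mod hd hr hg
  set g := Nat.gcd d r with hgd
  set q := d / g with hqd
  have hg0 : 0 < g := Nat.gcd_pos_of_pos_left r hd
  have hq0 : 0 < q := Nat.div_pos (Nat.le_of_dvd hd (Nat.gcd_dvd_left d r)) hg0
  have hdq : d = q * g := by rw [hqd, Nat.div_mul_cancel (Nat.gcd_dvd_left d r)]
  have hfe : (Finset.range (N+1)).filter (fun n => d ∣ a + n * r)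
      = (Finset.range (N+1)).filter (fun n => n % q = n0) :=
    Finset.filter_congr (fun n _ => by simp [hiff n])
  rw [hfe]
  have heq : ((N:ℝ)+1) * g / d = ((N:ℝ)+1)/q := by
    rw [hdq]
    have hgr : (g:ℝ) ≠ 0 := by exact_mod_cast hg0.ne'
    have hqr : (q:ℝ) ≠ 0 := by exact_mod_cast hq0.ne'
    push_cast
    field_simp
  rw [heq]
  exact abs_card_mod_sub q n0 N hq0 hn0

lemma count_zero_of_large {d r a N : ℕ} (ha : 0 < a) (hlarge : a + N * r < d) :
    ((Finset.range (N+1)).filter (fun n => d ∣ a + n * r)).card = 0 := by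
  rw [Finset.card_eq_zero, Finset.filter_eq_empty_iff]
  intro n hn hdvd
  simp only [Finset.mem_range] at hn
  have h1 : d ≤ a + n * r := Nat.le_of_dvd (by omega) hdvd
  have h2 : n * r ≤ N * r := Nat.mul_le_mul_right r (by omega)
  omega

lemma count_le {d r a N : ℕ} :
    ((Finset.range (N+1)).filter (fun n => d ∣ a + n * r)).card ≤ N + 1 :=
  le_trans (Finset.card_filter_le _ _) (by rw [Finset.card_range])

open ArithmeticFunction ArithmeticFunction.Moebius ArithmeticFunction.zeta in
lemma moebius_identity (A B M : ℕ) (hA : 1 ≤ A) (hAM : A ≤ M) :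
    (if Nat.gcd A B = 1 then (1:ℤ) else 0)
      = ∑ d ∈ Finset.range (M+1), if d ∣ A ∧ d ∣ B then μ d else 0 := by
  have hgpos : 0 < Nat.gcd A B := Nat.gcd_pos_of_pos_left B hA
  have hsub : (Nat.gcd A B).divisors ⊆ Finset.range (M+1) := by
    intro d hd
    rw [Nat.mem_divisors] at hd
    have := Nat.le_of_dvd hgpos hd.1
    have := Nat.gcd_le_left (m := A) B hA
    simp only [Finset.mem_range]
    omega
  have h1 : ∑ d ∈ Finset.range (M+1), (if d ∣ A ∧ d ∣ B then μ d else 0)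
      = ∑ d ∈ (Nat.gcd A B).divisors, μ d := by
    rw [← Finset.sum_subset hsub (fun d _ hd => by
      rw [Nat.mem_divisors, not_and_or] at hd
      rcases hd with hd | hd
      · exact if_neg (fun hc : d ∣ A ∧ d ∣ B => hd (Nat.dvd_gcd hc.1 hc.2))
      · exact absurd hgpos.ne' (by simpa using hd))]
    apply Finset.sum_congr rfl
    intro d hd
    rw [Nat.mem_divisors] at hd
    rw [if_pos ⟨hd.1.trans (Nat.gcd_dvd_left A B), hd.1.trans (Nat.gcd_dvd_right A B)⟩]
  rw [h1]
  have h2 : ∑ d ∈ (Nat.gcd A B).divisors, μ d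
      = (μ * (ζ : ArithmeticFunction ℤ)) (Nat.gcd A B) := by
    rw [coe_mul_zeta_apply]
  rw [h2, moebius_mul_coe_zeta, one_apply]

open ArithmeticFunction ArithmeticFunction.Moebius ArithmeticFunction.zeta in
lemma card_eq_sum (a0 b0 r0 u0 N : ℕ) (ha : 1 ≤ a0) (hb : 1 ≤ b0) :
    ((((Finset.range (N+1) ×ˢ Finset.range (N+1)).filter
        (fun p => Nat.gcd (a0 + p.1 * r0) (b0 + p.2 * u0) = 1)).card : ℤ))
      = ∑ d ∈ Finset.range (a0 + N * r0 + 1),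
          (μ d) *
            (((Finset.range (N+1)).filter (fun n => d ∣ a0 + n * r0)).card : ℤ) *
            (((Finset.range (N+1)).filter (fun m => d ∣ b0 + m * u0)).card : ℤ) := by
  set M := a0 + N * r0 with hM
  have step1 : ((((Finset.range (N+1) ×ˢ Finset.range (N+1)).filter
        (fun p => Nat.gcd (a0 + p.1 * r0) (b0 + p.2 * u0) = 1)).card : ℤ))
      = ∑ p ∈ Finset.range (N+1) ×ˢ Finset.range (N+1),
          if Nat.gcd (a0 + p.1 * r0) (b0 + p.2 * u0) = 1 then (1:ℤ) else 0 := by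
    rw [Finset.sum_boole]
  rw [step1]
  have step2 : ∀ p ∈ Finset.range (N+1) ×ˢ Finset.range (N+1),
      (if Nat.gcd (a0 + p.1 * r0) (b0 + p.2 * u0) = 1 then (1:ℤ) else 0)
        = ∑ d ∈ Finset.range (M+1),
            if d ∣ a0 + p.1 * r0 ∧ d ∣ b0 + p.2 * u0 then μ d else 0 := by
    intro p hp
    rw [Finset.mem_product, Finset.mem_range, Finset.mem_range] at hp
    apply moebius_identity _ _ _ (by omega)
    have : p.1 * r0 ≤ N * r0 := Nat.mul_le_mul_right r0 (by omega)
    omega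
  rw [Finset.sum_congr rfl step2, Finset.sum_comm]
  apply Finset.sum_congr rfl
  intro d _
  have split : ∀ p : ℕ × ℕ,
      (if d ∣ a0 + p.1 * r0 ∧ d ∣ b0 + p.2 * u0 then (μ d : ℤ) else 0)
        = μ d * ((if d ∣ a0 + p.1 * r0 then (1:ℤ) else 0)
            * (if d ∣ b0 + p.2 * u0 then (1:ℤ) else 0)) := by
    intro p
    by_cases h1 : d ∣ a0 + p.1 * r0 <;> by_cases h2 : d ∣ b0 + p.2 * u0 <;>
      simp [h1, h2]
  calc ∑ p ∈ Finset.range (N+1) ×ˢ Finset.range (N+1),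
        (if d ∣ a0 + p.1 * r0 ∧ d ∣ b0 + p.2 * u0 then (μ d : ℤ) else 0)
      = ∑ p ∈ Finset.range (N+1) ×ˢ Finset.range (N+1),
          μ d * ((if d ∣ a0 + p.1 * r0 then (1:ℤ) else 0)
            * (if d ∣ b0 + p.2 * u0 then (1:ℤ) else 0)) :=
        Finset.sum_congr rfl (fun p _ => split p)
    _ = μ d * ((∑ n ∈ Finset.range (N+1), if d ∣ a0 + n * r0 then (1:ℤ) else 0)
          * (∑ m ∈ Finset.range (N+1), if d ∣ b0 + m * u0 then (1:ℤ) else 0)) := by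
        rw [← Finset.mul_sum, Finset.sum_mul_sum, Finset.sum_product]
    _ = _ := by rw [Finset.sum_boole, Finset.sum_boole]; ring

lemma count_tendsto {d r a : ℕ} (hd : 0 < d) (hr : 0 < r) (hg : Nat.gcd d r ∣ a) :
    Tendsto (fun N : ℕ =>
        (((Finset.range (N+1)).filter (fun n => d ∣ a + n * r)).card : ℝ) / N)
      atTop (nhds ((Nat.gcd d r : ℝ) / d)) := by
  set g := Nat.gcd d r with hgdef
  set c : ℕ → ℝ := fun N =>
    (((Finset.range (N+1)).filter (fun n => d ∣ a + n * r)).card : ℝ) with hc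
  have hb : ∀ N : ℕ, |c N - ((N:ℝ)+1) * g / d| ≤ 1 := fun N => count_bound hd hr hg N
  have heq : ∀ N : ℕ, c N / N
      = (c N - ((N:ℝ)+1) * g / d) / N + ((N:ℝ)+1)/N * ((g:ℝ)/d) := by
    intro N; ring
  have l1 : Tendsto (fun N : ℕ => (c N - ((N:ℝ)+1) * g / d) / N) atTop (nhds 0) := by
    apply squeeze_zero_norm (a := fun N : ℕ => 1/(N:ℝ)) _ tendsto_one_div_atTop_nhds_zero_nat
    intro N
    rcases Nat.eq_zero_or_pos N with h0 | h0
    · simp [h0]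
    · have hN : (0:ℝ) < N := by exact_mod_cast h0
      rw [norm_div, Real.norm_eq_abs, Real.norm_eq_abs, abs_of_pos hN]
      exact div_le_div_of_nonneg_right (hb N) hN.le |>.trans_eq rfl
  have l2 : Tendsto (fun N : ℕ => ((N:ℝ)+1)/N) atTop (nhds 1) := by
    have base : Tendsto (fun N : ℕ => 1 + 1/(N:ℝ)) atTop (nhds 1) := by
      simpa using (tendsto_const_nhds : Tendsto (fun _ : ℕ => (1:ℝ)) atTop (nhds 1)).add tendsto_one_div_atTop_nhds_zero_nat
    apply base.congr'
    filter_upwards [eventually_ge_atTop 1] with N hN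
    have hN0 : (N:ℝ) ≠ 0 := by
      have : N ≠ 0 := by omega
      exact_mod_cast this
    field_simp
  have l3 := l1.add (l2.mul_const ((g:ℝ)/d))
  rw [zero_add, one_mul] at l3
  exact l3.congr (fun N => (heq N).symm)

/-- **A further extension of Dirichlet's density theorem.**  For all integers
`a₀, b₀, r₀, u₀ ≥ 1`, the density of pairs `(n,m)` with `0 ≤ n,m ≤ N` such that
`gcd(a₀+n·r₀, b₀+m·u₀) = 1` converges, as `N → ∞`, to
`Δ(a₀,b₀;r₀,u₀) = ∑_{d ≥ 1, gcd(d,r₀) ∣ a₀, gcd(d,u₀) ∣ b₀} (μ(d)/d²)·gcd(d,r₀)·gcd(d,u₀)`. -/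
theorem density_visible_points_on_general_grid
    (a0 b0 r0 u0 : ℕ) (ha : 1 ≤ a0) (hb : 1 ≤ b0) (hr : 1 ≤ r0) (hu : 1 ≤ u0) :
    Tendsto (fun N : ℕ =>
        (((Finset.range (N + 1) ×ˢ Finset.range (N + 1)).filter
            (fun p => Nat.gcd (a0 + p.1 * r0) (b0 + p.2 * u0) = 1)).card : ℝ) /
          (N : ℝ) ^ 2)
      atTop
      (nhds (∑' d : ℕ, if 1 ≤ d ∧ Nat.gcd d r0 ∣ a0 ∧ Nat.gcd d u0 ∣ b0 then
        (ArithmeticFunction.moebius d : ℝ) / (d : ℝ) ^ 2 *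
          (Nat.gcd d r0 : ℝ) * (Nat.gcd d u0 : ℝ) else 0)) := by
  classical
  have hSum : Summable (fun d : ℕ => (((a0+3*r0 : ℕ):ℝ) * ((b0+3*u0 : ℕ):ℝ)) / (d:ℝ)^2) := by
    have h2 : Summable (fun d : ℕ => 1 / (d:ℝ)^2) :=
      Real.summable_one_div_nat_pow.mpr one_lt_two
    simpa [mul_one_div, div_eq_mul_inv] using h2.mul_left (((a0+3*r0 : ℕ):ℝ) * ((b0+3*u0 : ℕ):ℝ))
  have hpoint : ∀ d : ℕ, Tendsto (fun N : ℕ =>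
      (ArithmeticFunction.moebius d : ℝ)
        * (((Finset.range (N+1)).filter (fun n => d ∣ a0 + n * r0)).card : ℝ)
        * (((Finset.range (N+1)).filter (fun m => d ∣ b0 + m * u0)).card : ℝ)
        / (N:ℝ)^2) atTop
      (nhds (if 1 ≤ d ∧ Nat.gcd d r0 ∣ a0 ∧ Nat.gcd d u0 ∣ b0 then
        (ArithmeticFunction.moebius d : ℝ) / (d : ℝ) ^ 2 *
          (Nat.gcd d r0 : ℝ) * (Nat.gcd d u0 : ℝ) else 0)) := by
    intro d
    rcases Nat.eq_zero_or_pos d with rfl | hd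
    · simpa using tendsto_const_nhds
    by_cases hga : Nat.gcd d r0 ∣ a0
    · by_cases hgb : Nat.gcd d u0 ∣ b0
      · rw [if_pos ⟨hd, hga, hgb⟩]
        have l := ((count_tendsto hd hr hga).mul (count_tendsto hd hu hgb)).const_mul
          ((ArithmeticFunction.moebius d : ℝ))
        have heql : (ArithmeticFunction.moebius d : ℝ)
            * ((Nat.gcd d r0 : ℝ)/d * ((Nat.gcd d u0 : ℝ)/d))
            = (ArithmeticFunction.moebius d : ℝ) / (d : ℝ) ^ 2 *
              (Nat.gcd d r0 : ℝ) * (Nat.gcd d u0 : ℝ) := by ring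
        rw [← heql]
        refine l.congr (fun N => ?_)
        ring
      · have hT : ∀ N : ℕ,
            ((Finset.range (N+1)).filter (fun m => d ∣ b0 + m * u0)).card = 0 :=
          fun N => Finset.card_eq_zero.mpr (Finset.filter_eq_empty_iff.mpr
            (fun m _ => not_solvable_empty hgb m))
        rw [if_neg (by tauto)]
        have hfun : ∀ N : ℕ, (ArithmeticFunction.moebius d : ℝ)
            * (((Finset.range (N+1)).filter (fun n => d ∣ a0 + n * r0)).card : ℝ)
            * (((Finset.range (N+1)).filter (fun m => d ∣ b0 + m * u0)).card : ℝ)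
            / (N:ℝ)^2 = 0 := by
          intro N; rw [hT N]; simp
        exact tendsto_const_nhds.congr (fun N => (hfun N).symm)
    · have hS : ∀ N : ℕ,
          ((Finset.range (N+1)).filter (fun n => d ∣ a0 + n * r0)).card = 0 :=
        fun N => Finset.card_eq_zero.mpr (Finset.filter_eq_empty_iff.mpr
          (fun n _ => not_solvable_empty hga n))
      rw [if_neg (by tauto)]
      have hfun : ∀ N : ℕ, (ArithmeticFunction.moebius d : ℝ)
          * (((Finset.range (N+1)).filter (fun n => d ∣ a0 + n * r0)).card : ℝ)
          * (((Finset.range (N+1)).filter (fun m => d ∣ b0 + m * u0)).card : ℝ)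
          / (N:ℝ)^2 = 0 := by
        intro N; rw [hS N]; simp
      exact tendsto_const_nhds.congr (fun N => (hfun N).symm)
  have hbound : ∀ᶠ N : ℕ in atTop, ∀ d : ℕ,
      ‖(ArithmeticFunction.moebius d : ℝ)
        * (((Finset.range (N+1)).filter (fun n => d ∣ a0 + n * r0)).card : ℝ)
        * (((Finset.range (N+1)).filter (fun m => d ∣ b0 + m * u0)).card : ℝ)
        / (N:ℝ)^2‖ ≤ (((a0+3*r0 : ℕ):ℝ) * ((b0+3*u0 : ℕ):ℝ)) / (d:ℝ)^2 := by
    filter_upwards [eventually_ge_atTop 1] with N hN d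
    have hN0 : (0:ℝ) < N := by exact_mod_cast hN
    rcases Nat.eq_zero_or_pos d with rfl | hd
    · simp
    by_cases hda : a0 + N * r0 < d
    · rw [count_zero_of_large ha hda]
      simp only [Nat.cast_zero, mul_zero, zero_mul, zero_div, norm_zero]
      positivity
    by_cases hdb : b0 + N * u0 < d
    · rw [count_zero_of_large hb hdb]
      simp only [Nat.cast_zero, mul_zero, zero_mul, zero_div, norm_zero]
      positivity
    push_neg at hda hdb
    have hd0 : (0:ℝ) < d := by exact_mod_cast hd
    have hdra : (d:ℝ) ≤ ((a0+r0 : ℕ):ℝ) * N := by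
      have h1 : a0 * 1 ≤ a0 * N := Nat.mul_le_mul_left a0 hN
      have h2 : (a0+r0) * N = a0*N + r0*N := by ring
      have h3 : N * r0 = r0 * N := by ring
      have : d ≤ (a0+r0) * N := by omega
      exact_mod_cast this
    have hdrb : (d:ℝ) ≤ ((b0+u0 : ℕ):ℝ) * N := by
      have h1 : b0 * 1 ≤ b0 * N := Nat.mul_le_mul_left b0 hN
      have h2 : (b0+u0) * N = b0*N + u0*N := by ring
      have h3 : N * u0 = u0 * N := by ring
      have : d ≤ (b0+u0) * N := by omega
      exact_mod_cast this
    have hN1 : (1:ℝ) ≤ N := by exact_mod_cast hN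
    have hSb : (((Finset.range (N+1)).filter (fun n => d ∣ a0 + n * r0)).card : ℝ)
        ≤ ((a0+3*r0 : ℕ):ℝ) * N / d := by
      by_cases hga : Nat.gcd d r0 ∣ a0
      · have h1 := abs_le.mp (count_bound hd hr hga N)
        have hgle : (Nat.gcd d r0 : ℝ) ≤ r0 := by
          exact_mod_cast Nat.le_of_dvd hr (Nat.gcd_dvd_right d r0)
        have key1 : ((N:ℝ)+1) * (Nat.gcd d r0 : ℝ) / d ≤ 2*N*(r0:ℝ)/d := by
          apply div_le_div_of_nonneg_right _ hd0.le
          have : ((N:ℝ)+1) ≤ 2*N := by linarith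
          exact mul_le_mul this hgle (Nat.cast_nonneg _) (by linarith)
        have key2 : (1:ℝ) ≤ ((a0+r0 : ℕ):ℝ) * N / d := by
          rw [le_div_iff₀ hd0]; linarith
        have : (((Finset.range (N+1)).filter (fun n => d ∣ a0 + n * r0)).card : ℝ)
            ≤ 2*N*(r0:ℝ)/d + ((a0+r0 : ℕ):ℝ) * N / d := by linarith [h1.2]
        refine this.trans (le_of_eq ?_)
        push_cast
        field_simp
        ring
      · have h0 : ((Finset.range (N+1)).filter (fun n => d ∣ a0 + n * r0)).card = 0 :=
          Finset.card_eq_zero.mpr (Finset.filter_eq_empty_iff.mpr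
            (fun n _ => not_solvable_empty hga n))
        rw [h0]
        simp only [Nat.cast_zero]
        positivity
    have hTb : (((Finset.range (N+1)).filter (fun m => d ∣ b0 + m * u0)).card : ℝ)
        ≤ ((b0+3*u0 : ℕ):ℝ) * N / d := by
      by_cases hgb : Nat.gcd d u0 ∣ b0
      · have h1 := abs_le.mp (count_bound hd hu hgb N)
        have hgle : (Nat.gcd d u0 : ℝ) ≤ u0 := by
          exact_mod_cast Nat.le_of_dvd hu (Nat.gcd_dvd_right d u0)
        have key1 : ((N:ℝ)+1) * (Nat.gcd d u0 : ℝ) / d ≤ 2*N*(u0:ℝ)/d := by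
          apply div_le_div_of_nonneg_right _ hd0.le
          have : ((N:ℝ)+1) ≤ 2*N := by linarith
          exact mul_le_mul this hgle (Nat.cast_nonneg _) (by linarith)
        have key2 : (1:ℝ) ≤ ((b0+u0 : ℕ):ℝ) * N / d := by
          rw [le_div_iff₀ hd0]; linarith
        have : (((Finset.range (N+1)).filter (fun m => d ∣ b0 + m * u0)).card : ℝ)
            ≤ 2*N*(u0:ℝ)/d + ((b0+u0 : ℕ):ℝ) * N / d := by linarith [h1.2]
        refine this.trans (le_of_eq ?_)
        push_cast
        field_simp
        ring
      · have h0 : ((Finset.range (N+1)).filter (fun m => d ∣ b0 + m * u0)).card = 0 :=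
          Finset.card_eq_zero.mpr (Finset.filter_eq_empty_iff.mpr
            (fun m _ => not_solvable_empty hgb m))
        rw [h0]
        simp only [Nat.cast_zero]
        positivity
    have hmu : |(ArithmeticFunction.moebius d : ℝ)| ≤ 1 := by
      have := ArithmeticFunction.abs_moebius_le_one (n := d)
      exact_mod_cast this
    have hSnn : (0:ℝ) ≤ (((Finset.range (N+1)).filter (fun n => d ∣ a0 + n * r0)).card : ℝ) :=
      Nat.cast_nonneg _
    have hTnn : (0:ℝ) ≤ (((Finset.range (N+1)).filter (fun m => d ∣ b0 + m * u0)).card : ℝ) :=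
      Nat.cast_nonneg _
    have hnorm : ‖(ArithmeticFunction.moebius d : ℝ)
        * (((Finset.range (N+1)).filter (fun n => d ∣ a0 + n * r0)).card : ℝ)
        * (((Finset.range (N+1)).filter (fun m => d ∣ b0 + m * u0)).card : ℝ)
        / (N:ℝ)^2‖
        = |(ArithmeticFunction.moebius d : ℝ)|
          * (((Finset.range (N+1)).filter (fun n => d ∣ a0 + n * r0)).card : ℝ)
          * (((Finset.range (N+1)).filter (fun m => d ∣ b0 + m * u0)).card : ℝ)
          / (N:ℝ)^2 := by
      rw [Real.norm_eq_abs, abs_div, abs_mul, abs_mul, abs_of_nonneg hSnn,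
        abs_of_nonneg hTnn, abs_of_nonneg (by positivity : (0:ℝ) ≤ (N:ℝ)^2)]
    rw [hnorm]
    calc |(ArithmeticFunction.moebius d : ℝ)|
          * (((Finset.range (N+1)).filter (fun n => d ∣ a0 + n * r0)).card : ℝ)
          * (((Finset.range (N+1)).filter (fun m => d ∣ b0 + m * u0)).card : ℝ)
          / (N:ℝ)^2
        ≤ 1 * (((a0+3*r0 : ℕ):ℝ) * N / d) * (((b0+3*u0 : ℕ):ℝ) * N / d) / (N:ℝ)^2 := by
          gcongr
      _ = (((a0+3*r0 : ℕ):ℝ) * ((b0+3*u0 : ℕ):ℝ)) / (d:ℝ)^2 := by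
          field_simp
  have main := tendsto_tsum_of_dominated_convergence hSum hpoint hbound
  refine main.congr (fun N => ?_)
  have hvanish : ∀ d ∉ Finset.range (a0 + N * r0 + 1),
      (ArithmeticFunction.moebius d : ℝ)
        * (((Finset.range (N+1)).filter (fun n => d ∣ a0 + n * r0)).card : ℝ)
        * (((Finset.range (N+1)).filter (fun m => d ∣ b0 + m * u0)).card : ℝ)
        / (N:ℝ)^2 = 0 := by
    intro d hdm
    rw [Finset.mem_range, not_lt] at hdm
    rw [count_zero_of_large ha (by omega)]
    simp
  rw [tsum_eq_sum hvanish]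
  have hcR : ((((Finset.range (N + 1) ×ˢ Finset.range (N + 1)).filter
        (fun p => Nat.gcd (a0 + p.1 * r0) (b0 + p.2 * u0) = 1)).card : ℝ))
      = ∑ d ∈ Finset.range (a0 + N * r0 + 1),
          (ArithmeticFunction.moebius d : ℝ)
            * (((Finset.range (N+1)).filter (fun n => d ∣ a0 + n * r0)).card : ℝ)
            * (((Finset.range (N+1)).filter (fun m => d ∣ b0 + m * u0)).card : ℝ) := by
    exact_mod_cast card_eq_sum a0 b0 r0 u0 N ha hb
  rw [hcR, Finset.sum_div]
end

section
/- For all integers a₀, b₀, r₀, u₀ ≥ 1, the quantity Δ(a₀,b₀;r₀,u₀) = Σ_{d ≥ 1, gcd(d,r₀) | a₀ and gcd(d,u₀) | b₀} (μ(d)/d²)·gcd(d,r₀)·gcd(d,u₀) admits the product representation Δ(a₀,b₀;r₀,u₀) = δ · ∏_{p ∈ H} (1 − 1/p) · ∏_{p prime, p ∤ lcm(r₀,u₀)} (1 − 1/p²), where δ = 1 if gcd(a₀,b₀,r₀,u₀) = 1 and δ = 0 otherwise, and H is the set of primes p such that either (p | r₀ and p ∤ u₀ and p | a₀) or (p | u₀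 and p ∤ r₀ and p | b₀). -/
open Finset

namespace DeltaAux

/-- The summand of `Δ(a₀,b₀;r₀,u₀)`. -/
noncomputable def F (a0 b0 r0 u0 : ℕ) : ℕ → ℝ := fun d =>
  if 1 ≤ d ∧ Nat.gcd d r0 ∣ a0 ∧ Nat.gcd d u0 ∣ b0 then
    (ArithmeticFunction.moebius d : ℝ) / (d : ℝ) ^ 2 *
      (Nat.gcd d r0 : ℝ) * (Nat.gcd d u0 : ℝ) else 0

variable {a0 b0 r0 u0 : ℕ}

lemma F_zero : F a0 b0 r0 u0 0 = 0 := by simp [F]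

lemma F_one : F a0 b0 r0 u0 1 = 1 := by
  simp [F, Nat.gcd_one_left]

lemma F_mul {m n : ℕ} (hmn : Nat.Coprime m n) :
    F a0 b0 r0 u0 (m * n) = F a0 b0 r0 u0 m * F a0 b0 r0 u0 n := by
  rcases Nat.eq_zero_or_pos m with hm | hm
  · subst hm
    have : n = 1 := Nat.coprime_zero_left n |>.mp hmn
    subst this; simp [F_zero, F_one]
  rcases Nat.eq_zero_or_pos n with hn | hn
  · subst hn
    have : m = 1 := Nat.coprime_zero_right m |>.mp hmn
    subst this; simp [F_zero, F_one]
  have hgr : Nat.gcd (m * n) r0 = Nat.gcd m r0 * Nat.gcd n r0 := by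
    rw [Nat.gcd_comm, Nat.Coprime.gcd_mul _ hmn, Nat.gcd_comm r0 m, Nat.gcd_comm r0 n]
  have hgu : Nat.gcd (m * n) u0 = Nat.gcd m u0 * Nat.gcd n u0 := by
    rw [Nat.gcd_comm, Nat.Coprime.gcd_mul _ hmn, Nat.gcd_comm u0 m, Nat.gcd_comm u0 n]
  have hcr : Nat.Coprime (Nat.gcd m r0) (Nat.gcd n r0) :=
    Nat.Coprime.coprime_dvd_left (Nat.gcd_dvd_left m r0)
      (Nat.Coprime.coprime_dvd_right (Nat.gcd_dvd_left n r0) hmn)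
  have hcu : Nat.Coprime (Nat.gcd m u0) (Nat.gcd n u0) :=
    Nat.Coprime.coprime_dvd_left (Nat.gcd_dvd_left m u0)
      (Nat.Coprime.coprime_dvd_right (Nat.gcd_dvd_left n u0) hmn)
  have hiff : (1 ≤ m * n ∧ Nat.gcd (m * n) r0 ∣ a0 ∧ Nat.gcd (m * n) u0 ∣ b0) ↔
      ((1 ≤ m ∧ Nat.gcd m r0 ∣ a0 ∧ Nat.gcd m u0 ∣ b0) ∧
       (1 ≤ n ∧ Nat.gcd n r0 ∣ a0 ∧ Nat.gcd n u0 ∣ b0)) := by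
    constructor
    · rintro ⟨-, h2, h3⟩
      rw [hgr] at h2; rw [hgu] at h3
      exact ⟨⟨hm, (dvd_mul_right _ _).trans h2, (dvd_mul_right _ _).trans h3⟩,
        ⟨hn, (dvd_mul_left _ _).trans h2, (dvd_mul_left _ _).trans h3⟩⟩
    · rintro ⟨⟨-, h2, h3⟩, ⟨-, h4, h5⟩⟩
      refine ⟨Nat.one_le_iff_ne_zero.mpr (by positivity), ?_, ?_⟩
      · rw [hgr]; exact Nat.Coprime.mul_dvd_of_dvd_of_dvd hcr h2 h4
      · rw [hgu]; exact Nat.Coprime.mul_dvd_of_dvd_of_dvd hcu h3 h5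
  by_cases hc : 1 ≤ m * n ∧ Nat.gcd (m * n) r0 ∣ a0 ∧ Nat.gcd (m * n) u0 ∣ b0
  · obtain ⟨hc1, hc2⟩ := hiff.mp hc
    simp only [F, if_pos hc, if_pos hc1, if_pos hc2]
    rw [hgr, hgu, ArithmeticFunction.isMultiplicative_moebius.map_mul_of_coprime hmn]
    push_cast
    ring
  · have h0 : F a0 b0 r0 u0 (m * n) = 0 := by simp only [F, if_neg hc]
    rcases not_and_or.mp (hiff.not.mp hc) with h | h
    · have hx : F a0 b0 r0 u0 m = 0 := by simp only [F, if_neg h]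
      rw [h0, hx, zero_mul]
    · have hx : F a0 b0 r0 u0 n = 0 := by simp only [F, if_neg h]
      rw [h0, hx, mul_zero]

lemma F_summable (hr : 1 ≤ r0) (hu : 1 ≤ u0) :
    Summable (fun d => ‖F a0 b0 r0 u0 d‖) := by
  have hs : Summable (fun d : ℕ => (r0 * u0 : ℝ) * (1 / (d : ℝ) ^ 2)) :=
    (Real.summable_one_div_nat_pow.mpr one_lt_two).mul_left _
  refine Summable.of_nonneg_of_le (fun d => norm_nonneg _) (fun d => ?_) hs
  rcases Nat.eq_zero_or_pos d with rfl | hd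
  · simp [F_zero]
  rw [F]
  split_ifs with h
  · rw [Real.norm_eq_abs, abs_mul, abs_mul, abs_div]
    have hmu : |(ArithmeticFunction.moebius d : ℝ)| ≤ 1 := by
      by_cases hsq : Squarefree d
      · rw [ArithmeticFunction.moebius_apply_of_squarefree hsq]
        push_cast
        rw [abs_pow, abs_neg, abs_one, one_pow]
      · rw [ArithmeticFunction.moebius_eq_zero_of_not_squarefree hsq]
        norm_num
    have h1 : |((Nat.gcd d r0 : ℕ) : ℝ)| ≤ (r0 : ℝ) := by
      rw [abs_of_nonneg (by positivity)]
      exact_mod_cast Nat.le_of_dvd hr (Nat.gcd_dvd_right d r0)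
    have h2 : |((Nat.gcd d u0 : ℕ) : ℝ)| ≤ (u0 : ℝ) := by
      rw [abs_of_nonneg (by positivity)]
      exact_mod_cast Nat.le_of_dvd hu (Nat.gcd_dvd_right d u0)
    have hd2 : (0:ℝ) < (d : ℝ) ^ 2 := by positivity
    calc |(ArithmeticFunction.moebius d : ℝ)| / |(d : ℝ) ^ 2| * |((Nat.gcd d r0 : ℕ) : ℝ)| *
          |((Nat.gcd d u0 : ℕ) : ℝ)|
        ≤ 1 / (d : ℝ) ^ 2 * (r0 : ℝ) * (u0 : ℝ) := by
          rw [abs_of_nonneg hd2.le]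
          gcongr
      _ = (r0 * u0 : ℝ) * (1 / (d : ℝ) ^ 2) := by push_cast; ring
  · simpa using mul_nonneg (by positivity : (0:ℝ) ≤ (r0*u0:ℝ)) (by positivity : (0:ℝ) ≤ 1/(d:ℝ)^2)

lemma tsum_pow {p : ℕ} (hp : p.Prime) :
    ∑' e : ℕ, F a0 b0 r0 u0 (p ^ e) = 1 + F a0 b0 r0 u0 p := by
  rw [tsum_eq_sum (s := {0, 1}) ?h]
  · simp [F_one]
  · intro e he
    simp only [Finset.mem_insert, Finset.mem_singleton] at he
    push_neg at he
    have he0 : e ≠ 0 := he.1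
    have hmu : ArithmeticFunction.moebius (p ^ e) = 0 := by
      rw [ArithmeticFunction.moebius_apply_prime_pow hp he0, if_neg he.2]
    simp [F, hmu]

lemma one_add_F_nn {p : ℕ} (hp : p.Prime) (h1 : ¬ p ∣ r0) (h2 : ¬ p ∣ u0) :
    1 + F a0 b0 r0 u0 p = 1 - 1 / (p : ℝ) ^ 2 := by
  have g1 : Nat.gcd p r0 = 1 := (Nat.Prime.coprime_iff_not_dvd hp).mpr h1
  have g2 : Nat.gcd p u0 = 1 := (Nat.Prime.coprime_iff_not_dvd hp).mpr h2
  rw [F, g1, g2, if_pos ⟨hp.one_lt.le, one_dvd _, one_dvd _⟩,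
    ArithmeticFunction.moebius_apply_prime hp]
  push_cast
  ring

lemma one_add_F_rn {p : ℕ} (hp : p.Prime) (h1 : p ∣ r0) (h2 : ¬ p ∣ u0) :
    1 + F a0 b0 r0 u0 p = if p ∣ a0 then 1 - 1 / (p : ℝ) else 1 := by
  have g1 : Nat.gcd p r0 = p := Nat.gcd_eq_left h1
  have g2 : Nat.gcd p u0 = 1 := (Nat.Prime.coprime_iff_not_dvd hp).mpr h2
  have hp0 : (p : ℝ) ≠ 0 := Nat.cast_ne_zero.mpr hp.pos.ne'
  rw [F, g1, g2]
  by_cases hA : p ∣ a0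
  · rw [if_pos ⟨hp.one_lt.le, hA, one_dvd _⟩, if_pos hA,
      ArithmeticFunction.moebius_apply_prime hp]
    push_cast
    field_simp
    ring
  · rw [if_neg (fun h => hA h.2.1), if_neg hA, add_zero]

lemma one_add_F_nu {p : ℕ} (hp : p.Prime) (h1 : ¬ p ∣ r0) (h2 : p ∣ u0) :
    1 + F a0 b0 r0 u0 p = if p ∣ b0 then 1 - 1 / (p : ℝ) else 1 := by
  have g1 : Nat.gcd p r0 = 1 := (Nat.Prime.coprime_iff_not_dvd hp).mpr h1
  have g2 : Nat.gcd p u0 = p := Nat.gcd_eq_left h2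
  have hp0 : (p : ℝ) ≠ 0 := Nat.cast_ne_zero.mpr hp.pos.ne'
  rw [F, g1, g2]
  by_cases hB : p ∣ b0
  · rw [if_pos ⟨hp.one_lt.le, one_dvd _, hB⟩, if_pos hB,
      ArithmeticFunction.moebius_apply_prime hp]
    push_cast
    field_simp
    ring
  · rw [if_neg (fun h => hB h.2.2), if_neg hB, add_zero]

lemma one_add_F_rr {p : ℕ} (hp : p.Prime) (h1 : p ∣ r0) (h2 : p ∣ u0) :
    1 + F a0 b0 r0 u0 p = if p ∣ a0 ∧ p ∣ b0 then 0 else 1 := by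
  have g1 : Nat.gcd p r0 = p := Nat.gcd_eq_left h1
  have g2 : Nat.gcd p u0 = p := Nat.gcd_eq_left h2
  have hp0 : (p : ℝ) ≠ 0 := Nat.cast_ne_zero.mpr hp.pos.ne'
  rw [F, g1, g2]
  by_cases hAB : p ∣ a0 ∧ p ∣ b0
  · rw [if_pos ⟨hp.one_lt.le, hAB.1, hAB.2⟩, if_pos hAB,
      ArithmeticFunction.moebius_apply_prime hp]
    push_cast
    field_simp
    ring
  · rw [if_neg (fun h => hAB ⟨h.2.1, h.2.2⟩), if_neg hAB, add_zero]

end DeltaAux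

set_option maxHeartbeats 1000000 in
/-- **Product representation of `Δ(a₀,b₀;r₀,u₀)`.**  For all integers
`a₀, b₀, r₀, u₀ ≥ 1`,
`Δ(a₀,b₀;r₀,u₀) = ∑_{d ≥ 1, gcd(d,r₀) ∣ a₀, gcd(d,u₀) ∣ b₀} (μ(d)/d²)·gcd(d,r₀)·gcd(d,u₀)`
equals `δ · ∏_{p ∈ H} (1 − 1/p) · ∏_{p prime, p ∤ lcm(r₀,u₀)} (1 − 1/p²)`, where
`δ = 1` if `gcd(a₀,b₀,r₀,u₀) = 1` and `δ = 0` otherwise, and `H` is the set of primes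
`p` with either (`p ∣ r₀`, `p ∤ u₀` and `p ∣ a₀`) or (`p ∣ u₀`, `p ∤ r₀` and `p ∣ b₀`). -/
theorem Delta_product_representation
    (a0 b0 r0 u0 : ℕ) (ha : 1 ≤ a0) (hb : 1 ≤ b0) (hr : 1 ≤ r0) (hu : 1 ≤ u0) :
    (∑' d : ℕ, if 1 ≤ d ∧ Nat.gcd d r0 ∣ a0 ∧ Nat.gcd d u0 ∣ b0 then
        (ArithmeticFunction.moebius d : ℝ) / (d : ℝ) ^ 2 *
          (Nat.gcd d r0 : ℝ) * (Nat.gcd d u0 : ℝ) else 0) =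
      (if Nat.gcd (Nat.gcd a0 b0) (Nat.gcd r0 u0) = 1 then (1 : ℝ) else 0) *
        (∏ p ∈ (r0 * u0).divisors.filter (fun p => p.Prime ∧
            ((p ∣ r0 ∧ ¬ p ∣ u0 ∧ p ∣ a0) ∨ (p ∣ u0 ∧ ¬ p ∣ r0 ∧ p ∣ b0))),
          (1 - 1 / (p : ℝ))) *
        (∏' p : {p : ℕ // p.Prime ∧ ¬ p ∣ Nat.lcm r0 u0},
          (1 - 1 / ((p : ℕ) : ℝ) ^ 2)) := by
  classical
  have hru0 : r0 * u0 ≠ 0 := Nat.mul_ne_zero (by omega) (by omega)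
  have hsum := DeltaAux.F_summable (a0 := a0) (b0 := b0) hr hu
  have HP : HasProd (fun p : Nat.Primes => ∑' e : ℕ, DeltaAux.F a0 b0 r0 u0 ((p : ℕ) ^ e))
      (∑' n, DeltaAux.F a0 b0 r0 u0 n) :=
    EulerProduct.eulerProduct_hasProd DeltaAux.F_one (fun hmn => DeltaAux.F_mul hmn)
      hsum DeltaAux.F_zero
  rw [show (fun p : Nat.Primes => ∑' e : ℕ, DeltaAux.F a0 b0 r0 u0 ((p : ℕ) ^ e))
      = fun p : Nat.Primes => 1 + DeltaAux.F a0 b0 r0 u0 p from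
      funext fun p => DeltaAux.tsum_pow p.2] at HP
  show (∑' n, DeltaAux.F a0 b0 r0 u0 n) = _
  by_cases hδ : Nat.gcd (Nat.gcd a0 b0) (Nat.gcd r0 u0) = 1
  case neg =>
    -- some prime divides all of a0, b0, r0, u0, so one Euler factor vanishes
    obtain ⟨p, pp, hpd⟩ := Nat.exists_prime_and_dvd hδ
    have hpa : p ∣ a0 := (hpd.trans (Nat.gcd_dvd_left _ _)).trans (Nat.gcd_dvd_left _ _)
    have hpb : p ∣ b0 := (hpd.trans (Nat.gcd_dvd_left _ _)).trans (Nat.gcd_dvd_right _ _)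
    have hpr : p ∣ r0 := (hpd.trans (Nat.gcd_dvd_right _ _)).trans (Nat.gcd_dvd_left _ _)
    have hpu : p ∣ u0 := (hpd.trans (Nat.gcd_dvd_right _ _)).trans (Nat.gcd_dvd_right _ _)
    have hFp0 : 1 + DeltaAux.F a0 b0 r0 u0 p = 0 := by
      rw [DeltaAux.one_add_F_rr pp hpr hpu, if_pos ⟨hpa, hpb⟩]
    have hzero : HasProd (fun p : Nat.Primes => 1 + DeltaAux.F a0 b0 r0 u0 p) 0 := by
      rw [HasProd]
      have hev : ∀ᶠ t : Finset Nat.Primes in Filter.atTop,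
          ∏ q ∈ t, (1 + DeltaAux.F a0 b0 r0 u0 (q : ℕ)) = 0 := by
        filter_upwards [Filter.eventually_ge_atTop ({⟨p, pp⟩} : Finset Nat.Primes)] with t ht
        exact Finset.prod_eq_zero
          (Finset.singleton_subset_iff.mp ht) hFp0
      exact Filter.Tendsto.congr' (hev.mono fun t h => h.symm) tendsto_const_nhds
    rw [HP.unique hzero, if_neg hδ, zero_mul, zero_mul]
  case pos =>
    have hlcm : ∀ p : ℕ, p.Prime → (p ∣ Nat.lcm r0 u0 ↔ p ∣ r0 * u0) := by
      intro p pp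
      constructor
      · exact fun h => h.trans (Nat.lcm_dvd (dvd_mul_right r0 u0) (dvd_mul_left u0 r0))
      · intro h
        rcases (Nat.Prime.dvd_mul pp).mp h with h | h
        · exact h.trans (Nat.dvd_lcm_left _ _)
        · exact h.trans (Nat.dvd_lcm_right _ _)
    set s : Finset Nat.Primes := (r0 * u0).primeFactors.attach.map
      ⟨fun q => ⟨q.1, Nat.prime_of_mem_primeFactors q.2⟩,
        fun x y h => by
          apply Subtype.ext
          have := congrArg Subtype.val h
          simpa using this⟩ with hsdef
    have hmem : ∀ q : Nat.Primes, q ∈ s ↔ (q : ℕ) ∣ r0 * u0 := by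
      intro q
      constructor
      · intro hq
        rw [hsdef, Finset.mem_map] at hq
        obtain ⟨x, hx, rfl⟩ := hq
        exact Nat.dvd_of_mem_primeFactors x.2
      · intro hq
        rw [hsdef, Finset.mem_map]
        exact ⟨⟨(q : ℕ), Nat.mem_primeFactors.mpr ⟨q.2, hq, hru0⟩⟩, Finset.mem_attach _ _,
          Subtype.ext rfl⟩
    -- second Euler product giving multipliability of the complement factors
    have HP2 : HasProd
        (fun p : Nat.Primes => ∑' e : ℕ, DeltaAux.F 1 1 (r0 * u0) (r0 * u0) ((p : ℕ) ^ e))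
        (∑' n, DeltaAux.F 1 1 (r0 * u0) (r0 * u0) n) :=
      EulerProduct.eulerProduct_hasProd DeltaAux.F_one (fun hmn => DeltaAux.F_mul hmn)
        (DeltaAux.F_summable (Nat.one_le_iff_ne_zero.mpr hru0) (Nat.one_le_iff_ne_zero.mpr hru0))
        DeltaAux.F_zero
    rw [show (fun p : Nat.Primes => ∑' e : ℕ, DeltaAux.F 1 1 (r0 * u0) (r0 * u0) ((p : ℕ) ^ e))
        = fun p : Nat.Primes => 1 + DeltaAux.F 1 1 (r0 * u0) (r0 * u0) p from
        funext fun p => DeltaAux.tsum_pow p.2] at HP2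
    have hG' : (fun p : Nat.Primes => 1 + DeltaAux.F 1 1 (r0 * u0) (r0 * u0) (p : ℕ))
        = Set.mulIndicator ((↑s : Set Nat.Primes)ᶜ)
            (fun p : Nat.Primes => 1 - 1 / ((p : ℕ) : ℝ) ^ 2) := by
      funext p
      by_cases hp : (p : ℕ) ∣ r0 * u0
      · have hps : p ∉ ((↑s : Set Nat.Primes)ᶜ) := by
          simp only [Set.mem_compl_iff, Finset.mem_coe, hmem, not_not]
          exact hp
        rw [Set.mulIndicator_of_notMem hps]
        rw [DeltaAux.one_add_F_rr p.2 hp hp, if_neg]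
        rintro ⟨h1, -⟩
        exact p.2.one_lt.ne' (Nat.dvd_one.mp h1)
      · have hps : p ∈ ((↑s : Set Nat.Primes)ᶜ) := by
          simp only [Set.mem_compl_iff, Finset.mem_coe, hmem]
          exact hp
        rw [Set.mulIndicator_of_mem hps]
        exact DeltaAux.one_add_F_nn p.2 hp hp
    rw [hG'] at HP2
    have hMc : Multipliable
        ((fun p : Nat.Primes => 1 + DeltaAux.F a0 b0 r0 u0 (p : ℕ)) ∘ (↑) :
          ↥((↑s : Set Nat.Primes)ᶜ) → ℝ) := by
      refine (hasProd_subtype_iff_mulIndicator.mpr HP2).multipliable.congr fun q => ?_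
      have hq : (q : Nat.Primes) ∈ ((↑s : Set Nat.Primes)ᶜ) := q.2
      simp only [Set.mem_compl_iff, Finset.mem_coe, hmem] at hq
      have h1 : ¬ ((q : Nat.Primes) : ℕ) ∣ r0 := fun h => hq (h.mul_right u0)
      have h2 : ¬ ((q : Nat.Primes) : ℕ) ∣ u0 := fun h => hq (h.mul_left r0)
      exact (DeltaAux.one_add_F_nn (q : Nat.Primes).2 h1 h2).symm
    have hsplit :=
      HP.unique ((s.hasProd (fun p : Nat.Primes => 1 + DeltaAux.F a0 b0 r0 u0 (p : ℕ))).mul_compl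
        hMc.hasProd)
    -- the finite part
    have hfin : (∏ q ∈ s, (1 + DeltaAux.F a0 b0 r0 u0 (q : ℕ))) =
        ∏ p ∈ (r0 * u0).divisors.filter (fun p => p.Prime ∧
            ((p ∣ r0 ∧ ¬ p ∣ u0 ∧ p ∣ a0) ∨ (p ∣ u0 ∧ ¬ p ∣ r0 ∧ p ∣ b0))),
          (1 - 1 / (p : ℝ)) := by
      rw [hsdef, Finset.prod_map]
      show ∏ x ∈ (r0 * u0).primeFactors.attach, (1 + DeltaAux.F a0 b0 r0 u0 (x : ℕ)) = _
      rw [Finset.prod_attach ((r0 * u0).primeFactors)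
        (fun p => 1 + DeltaAux.F a0 b0 r0 u0 p)]
      have hsub : (r0 * u0).divisors.filter (fun p => p.Prime ∧
            ((p ∣ r0 ∧ ¬ p ∣ u0 ∧ p ∣ a0) ∨ (p ∣ u0 ∧ ¬ p ∣ r0 ∧ p ∣ b0)))
          ⊆ (r0 * u0).primeFactors := by
        intro p hp
        rw [Finset.mem_filter, Nat.mem_divisors] at hp
        exact Nat.mem_primeFactors.mpr ⟨hp.2.1, hp.1.1, hru0⟩
      rw [← Finset.prod_subset hsub ?h1]
      · refine Finset.prod_congr rfl fun p hp => ?_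
        rw [Finset.mem_filter] at hp
        obtain ⟨hpd, pp, hH⟩ := hp
        rcases hH with ⟨h1, h2, h3⟩ | ⟨h1, h2, h3⟩
        · rw [DeltaAux.one_add_F_rn pp h1 h2, if_pos h3]
        · rw [DeltaAux.one_add_F_nu pp h2 h1, if_pos h3]
      case h1 =>
        intro p hp hnp
        rw [Nat.mem_primeFactors] at hp
        obtain ⟨pp, hpd, -⟩ := hp
        have hnH : ¬ ((p ∣ r0 ∧ ¬ p ∣ u0 ∧ p ∣ a0) ∨ (p ∣ u0 ∧ ¬ p ∣ r0 ∧ p ∣ b0)) := by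
          intro hH
          exact hnp (Finset.mem_filter.mpr ⟨Nat.mem_divisors.mpr ⟨hpd, hru0⟩, pp, hH⟩)
        push_neg at hnH
        by_cases h1 : p ∣ r0 <;> by_cases h2 : p ∣ u0
        · rw [DeltaAux.one_add_F_rr pp h1 h2, if_neg]
          rintro ⟨hA, hB⟩
          have : p ∣ Nat.gcd (Nat.gcd a0 b0) (Nat.gcd r0 u0) :=
            Nat.dvd_gcd (Nat.dvd_gcd hA hB) (Nat.dvd_gcd h1 h2)
          rw [hδ, Nat.dvd_one] at this
          exact pp.one_lt.ne' this
        · rw [DeltaAux.one_add_F_rn pp h1 h2, if_neg (hnH.1 h1 h2)]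
        · rw [DeltaAux.one_add_F_nu pp h1 h2, if_neg (hnH.2 h2 h1)]
        · exact absurd ((Nat.Prime.dvd_mul pp).mp hpd) (by tauto)
    -- the infinite part
    let e : {p : ℕ // p.Prime ∧ ¬ p ∣ Nat.lcm r0 u0} ≃ ↥((↑s : Set Nat.Primes)ᶜ) :=
      { toFun := fun q => ⟨⟨q.1, q.2.1⟩, by
          exact fun h => q.2.2 ((hlcm q.1 q.2.1).mpr ((hmem _).mp h))⟩
        invFun := fun q => ⟨(q.1 : ℕ), q.1.2, fun h => by
          have := (hmem q.1).mpr ((hlcm _ q.1.2).mp h)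
          exact q.2 this⟩
        left_inv := fun q => rfl
        right_inv := fun q => rfl }
    have hinf : (∏' q : ↥((↑s : Set Nat.Primes)ᶜ), (1 + DeltaAux.F a0 b0 r0 u0 ((q : Nat.Primes) : ℕ))) =
        ∏' p : {p : ℕ // p.Prime ∧ ¬ p ∣ Nat.lcm r0 u0}, (1 - 1 / ((p : ℕ) : ℝ) ^ 2) := by
      rw [← Equiv.tprod_eq e (fun q : ↥((↑s : Set Nat.Primes)ᶜ) =>
        1 + DeltaAux.F a0 b0 r0 u0 ((q : Nat.Primes) : ℕ))]
      refine tprod_congr fun q => ?_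
      have h1 : ¬ (q : ℕ) ∣ r0 := fun h => q.2.2 (h.trans (Nat.dvd_lcm_left _ _))
      have h2 : ¬ (q : ℕ) ∣ u0 := fun h => q.2.2 (h.trans (Nat.dvd_lcm_right _ _))
      exact DeltaAux.one_add_F_nn (a0 := a0) (b0 := b0) q.2.1 h1 h2
    rw [hsplit, hfin, ← hinf, if_pos hδ, one_mul]
    rfl
end
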